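/- Hölder inequality: let f : ℝ → ℂ be 2π-periodic and Lebesgue integrable on [−π, π], and let g : ℝ → ℝ be 2π-periodic with bounded variation. Then |∫_{−π}^{π} f(t) g(t) dt| ≤ |∫_{−π}^{π} f(t) dt| · inf_ℝ |g| + ‖f‖_T · V g ≤ ‖f‖_T · ‖g‖_BV. -/

import Mathlib

open MeasureTheory Real

section AuxLemmas

private lemma key_mono_aux (f : ℝ → ℂ) (p : ℝ → ℝ) (a b M : ℝ) (hab : a ≤ b)
    (hp : Monotone p) (hpa : p a = 0)
    (hfi : IntegrableOn f (Set.Ioc a b) volume)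
    (hM : ∀ c d, a ≤ c → c ≤ d → d ≤ b → ‖(∫ t in c..d, f t)‖ ≤ M) :
    ‖(∫ t in a..b, f t * (p t : ℂ))‖ ≤ M * p b := by
  set P := p b with hPdef
  have hP0 : 0 ≤ P := hpa ▸ hp hab
  have hM0 : 0 ≤ M := by
    have := hM a a le_rfl le_rfl hab
    simpa using this
  set S : Set (ℝ × ℝ) := {z | z.2 < p z.1} with hSdef
  have hS : MeasurableSet S := measurableSet_lt measurable_snd (hp.measurable.comp measurable_fst)
  set G : ℝ × ℝ → ℂ := S.indicator (fun z => f z.1) with hGdef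
  set μ := volume.restrict (Set.Ioc a b) with hμ
  set ν := volume.restrict (Set.Ioc (0:ℝ) P) with hν
  have hfae : AEStronglyMeasurable (fun z : ℝ × ℝ => f z.1) (μ.prod ν) :=
    hfi.aestronglyMeasurable.comp_fst
  have hGae : AEStronglyMeasurable G (μ.prod ν) := hfae.indicator hS
  have hdom : Integrable (fun z : ℝ × ℝ => ‖f z.1‖ * (1:ℝ)) (μ.prod ν) :=
    hfi.norm.mul_prod (integrable_const 1)
  have hG : Integrable G (μ.prod ν) := by
    refine hdom.mono' hGae (Filter.Eventually.of_forall fun z => ?_)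
    simpa using norm_indicator_le_norm_self (fun z : ℝ × ℝ => f z.1) z
  have hint1 : ∀ t ∈ Set.Ioc a b, (∫ s in Set.Ioc (0:ℝ) P, G (t, s)) = f t * (p t : ℂ) := by
    intro t ht
    have hpt0 : 0 ≤ p t := hpa ▸ hp ht.1.le
    have hptP : p t ≤ P := hp ht.2
    have h1 : (fun s => G (t, s)) = (Set.Iio (p t)).indicator (fun _ => f t) := by
      funext s
      simp [hGdef, Set.indicator_apply, hSdef]
    rw [h1, setIntegral_indicator measurableSet_Iio,
      show Set.Ioc (0:ℝ) P ∩ Set.Iio (p t) = Set.Ioo 0 (p t) by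
        ext s
        simp only [Set.mem_inter_iff, Set.mem_Ioc, Set.mem_Iio, Set.mem_Ioo]
        constructor
        · rintro ⟨⟨h1, _⟩, h3⟩; exact ⟨h1, h3⟩
        · rintro ⟨h1, h3⟩; exact ⟨⟨h1, h3.le.trans hptP⟩, h3⟩]
    rw [setIntegral_const, Measure.real, Real.volume_Ioo, sub_zero, ENNReal.toReal_ofReal hpt0,
      Complex.real_smul, mul_comm]
  have huncurry : Function.uncurry (fun t s => G (t, s)) = G := by
    funext z; cases z; rfl
  have L2 : ∫ t in Set.Ioc a b, (∫ s in Set.Ioc (0:ℝ) P, G (t, s)) =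
      ∫ s in Set.Ioc (0:ℝ) P, (∫ t in Set.Ioc a b, G (t, s)) := by
    exact integral_integral_swap (by rwa [huncurry])
  have L3 : ∀ s ∈ Set.Ioc (0:ℝ) P, ‖∫ t in Set.Ioc a b, G (t, s)‖ ≤ M := by
    intro s hs
    have hU : MeasurableSet {t : ℝ | s < p t} := measurableSet_lt measurable_const hp.measurable
    have h1 : (fun t => G (t, s)) = ({t : ℝ | s < p t}).indicator f := by
      funext t; simp [hGdef, Set.indicator_apply, hSdef]
    rw [h1, setIntegral_indicator hU]
    by_cases hsb : s < p b
    · set U := {t : ℝ | s < p t} with hU'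
      have hbU : b ∈ U := hsb
      have hlb : ∀ t ∈ U, a ≤ t := by
        intro t ht
        by_contra hta
        have : p t ≤ 0 := hpa ▸ hp (le_of_not_ge hta)
        have : s < 0 := lt_of_lt_of_le ht this
        linarith [hs.1]
      set c := sInf U with hc
      have hac : a ≤ c := le_csInf ⟨b, hbU⟩ hlb
      have hcb : c ≤ b := csInf_le ⟨a, hlb⟩ hbU
      have hsub1 : Set.Ioc c b ⊆ Set.Ioc a b ∩ U := by
        intro t ht
        obtain ⟨u, hu, hut⟩ := exists_lt_of_csInf_lt ⟨b, hbU⟩ ht.1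
        exact ⟨⟨lt_of_le_of_lt hac ht.1, ht.2⟩, lt_of_lt_of_le hu (hp hut.le)⟩
      have hsub2 : Set.Ioc a b ∩ U ⊆ Set.Icc c b := fun t ht =>
        ⟨csInf_le ⟨a, hlb⟩ ht.2, ht.1.2⟩
      have hae : (Set.Ioc a b ∩ U : Set ℝ) =ᵐ[volume] Set.Ioc c b := by
        rw [MeasureTheory.ae_eq_set]
        constructor
        · refine measure_mono_null (fun t ht => ?_) (measure_singleton c)
          have := hsub2 ht.1
          have h2 : t ∉ Set.Ioc c b := ht.2
          simp only [Set.mem_Icc] at this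
          simp only [Set.mem_Ioc, not_and, not_le] at h2
          have : t = c := by
            rcases lt_or_eq_of_le this.1 with h | h
            · exact absurd this.2 (not_le.2 (h2 h))
            · exact h.symm
          simp [this]
        · rw [Set.diff_eq_empty.2 hsub1]; simp
      rw [setIntegral_congr_set hae, ← intervalIntegral.integral_of_le hcb]
      exact hM c b hac hcb le_rfl
    · rw [show Set.Ioc a b ∩ {t : ℝ | s < p t} = ∅ by
        ext t
        simp only [Set.mem_inter_iff, Set.mem_Ioc, Set.mem_setOf_eq, Set.mem_empty_iff_false,
          iff_false, not_and]
        intro h1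
        exact not_lt.2 ((hp h1.2).trans (not_lt.1 hsb)) ]
      simpa using hM0
  calc ‖(∫ t in a..b, f t * (p t : ℂ))‖
      = ‖∫ s in Set.Ioc (0:ℝ) P, (∫ t in Set.Ioc a b, G (t, s))‖ := by
        rw [intervalIntegral.integral_of_le hab,
          setIntegral_congr_fun measurableSet_Ioc (fun t ht => (hint1 t ht).symm), L2]
    _ ≤ M * (volume (Set.Ioc (0:ℝ) P)).toReal := by
        refine norm_setIntegral_le_of_norm_le_const ?_ L3
        rw [Real.volume_Ioc]
        exact ENNReal.ofReal_lt_top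
    _ = M * P := by rw [Real.volume_Ioc, sub_zero, ENNReal.toReal_ofReal hP0]

private lemma evar_sub_const_aux (g : ℝ → ℝ) (c : ℝ) (s : Set ℝ) :
    eVariationOn (fun t => g t - c) s = eVariationOn g s := by
  simp only [eVariationOn, edist_dist, Real.dist_eq, sub_sub_sub_cancel_right]

private lemma key2_aux (f : ℝ → ℂ) (h : ℝ → ℝ) (a b M : ℝ) (hab : a ≤ b)
    (hloc : LocallyBoundedVariationOn h Set.univ)
    (hha : h a = 0)
    (hfi : IntegrableOn f (Set.Ioc a b) volume)
    (hM : ∀ c d, a ≤ c → c ≤ d → d ≤ b → ‖(∫ t in c..d, f t)‖ ≤ M) :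
    ‖(∫ t in a..b, f t * (h t : ℂ))‖
      ≤ M * (eVariationOn h (Set.Icc a b)).toReal := by
  set v : ℝ → ℝ := variationOnFromTo h Set.univ a with hv
  have hvmono : Monotone v :=
    monotoneOn_univ.1 (variationOnFromTo.monotoneOn hloc (Set.mem_univ a))
  have hkey : ∀ s t : ℝ, s ≤ t → |h t - h s| ≤ v t - v s := by
    intro s t hst
    have hadd : v s + variationOnFromTo h Set.univ s t = v t :=
      variationOnFromTo.add hloc (Set.mem_univ a) (Set.mem_univ s) (Set.mem_univ t)
    have h1 : dist (h s) (h t) ≤ variationOnFromTo h Set.univ s t := by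
      rw [variationOnFromTo.eq_of_le _ _ hst, dist_edist]
      apply ENNReal.toReal_mono (hloc s t (Set.mem_univ s) (Set.mem_univ t))
      exact eVariationOn.edist_le h ⟨Set.mem_univ s, Set.mem_Icc.2 ⟨le_rfl, hst⟩⟩
        ⟨Set.mem_univ t, Set.mem_Icc.2 ⟨hst, le_rfl⟩⟩
    rw [Real.dist_eq, abs_sub_comm] at h1
    linarith
  set p : ℝ → ℝ := fun t => (v t + h t) / 2 with hpd
  set q : ℝ → ℝ := fun t => (v t - h t) / 2 with hqd
  have hpmono : Monotone p := by
    intro s t hst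
    have h1 := hkey s t hst
    have h2 := neg_abs_le (h t - h s)
    show (v s + h s) / 2 ≤ (v t + h t) / 2
    linarith
  have hqmono : Monotone q := by
    intro s t hst
    have h1 := hkey s t hst
    have h2 := le_abs_self (h t - h s)
    show (v s - h s) / 2 ≤ (v t - h t) / 2
    linarith
  have hva : v a = 0 := variationOnFromTo.self h Set.univ a
  have hpa : p a = 0 := by simp [hpd, hva, hha]
  have hqa : q a = 0 := by simp [hqd, hva, hha]
  have hvb : v b = (eVariationOn h (Set.Icc a b)).toReal := by
    rw [hv, variationOnFromTo.eq_of_le _ _ hab, Set.univ_inter]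
  have hmkint : ∀ r : ℝ → ℝ, Monotone r → r a = 0 →
      IntervalIntegrable (fun t => f t * (r t : ℂ)) volume a b := by
    intro r hr hra
    rw [intervalIntegrable_iff_integrableOn_Ioc_of_le hab]
    have heq : (fun t => f t * (r t : ℂ)) = fun t => ((r t : ℂ)) * f t := by
      funext t; ring
    rw [heq]
    refine Integrable.bdd_mul (c := r b) hfi
      ((Complex.measurable_ofReal.comp hr.measurable).aestronglyMeasurable) ?_
    refine (ae_restrict_iff' measurableSet_Ioc).2 (Filter.Eventually.of_forall fun t ht => ?_)
    have h0 : 0 ≤ r t := hra ▸ hr ht.1.le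
    have h1 : r t ≤ r b := hr ht.2
    rw [Complex.norm_real, Real.norm_eq_abs, abs_of_nonneg h0]
    exact h1
  have hsplit : ∀ t, f t * (h t : ℂ) = f t * (p t : ℂ) - f t * (q t : ℂ) := by
    intro t
    have h1 : h t = p t - q t := by simp only [hpd, hqd]; ring
    rw [h1]; push_cast; ring
  have hstep : (∫ t in a..b, f t * (h t : ℂ))
      = (∫ t in a..b, f t * (p t : ℂ)) - ∫ t in a..b, f t * (q t : ℂ) := by
    rw [← intervalIntegral.integral_sub (hmkint p hpmono hpa) (hmkint q hqmono hqa)]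
    exact intervalIntegral.integral_congr fun t _ => hsplit t
  rw [hstep]
  have htri : ‖((∫ t in a..b, f t * (p t : ℂ)) - ∫ t in a..b, f t * (q t : ℂ))‖
      ≤ ‖(∫ t in a..b, f t * (p t : ℂ))‖
        + ‖(∫ t in a..b, f t * (q t : ℂ))‖ := by
    have := norm_add_le (∫ t in a..b, f t * (p t : ℂ))
      (-(∫ t in a..b, f t * (q t : ℂ)))
    simpa [sub_eq_add_neg] using this
  refine htri.trans ?_
  have hbp := key_mono_aux f p a b M hab hpmono hpa hfi hM
  have hbq := key_mono_aux f q a b M hab hqmono hqa hfi hM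
  have hsum : M * p b + M * q b = M * v b := by simp only [hpd, hqd]; ring
  rw [← hvb]
  linarith

private lemma per_int_aux (f : ℝ → ℂ) (hper : Function.Periodic f (2 * π))
    (hint : IntervalIntegrable f volume (-π) π) :
    ∀ c d : ℝ, IntervalIntegrable f volume c d := by
  have key : ∀ n : ℕ, IntervalIntegrable f volume (-π - n * (2 * π)) (π + n * (2 * π)) := by
    intro n
    induction n with
    | zero => simpa using hint
    | succ n ih =>
      have left : IntervalIntegrable f volume (-π - (n + 1 : ℕ) * (2 * π))
          (-π - n * (2 * π)) := by
        have h1 := hint.comp_add_right (((n : ℕ) + 1 : ℕ) * (2 * π))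
        have hper' : (fun x => f (x + ((n : ℕ) + 1 : ℕ) * (2 * π))) = f := by
          funext x; exact hper.nat_mul (n + 1) x
        rw [hper'] at h1
        have e2 : π - (((n : ℕ) + 1 : ℕ) : ℝ) * (2 * π) = -π - n * (2 * π) := by
          push_cast; ring
        rw [e2] at h1
        exact h1
      have right : IntervalIntegrable f volume (π + n * (2 * π))
          (π + (n + 1 : ℕ) * (2 * π)) := by
        have h1 := hint.comp_sub_right (((n : ℕ) + 1 : ℕ) * (2 * π))
        have hper'' : (fun x => f (x - ((n : ℕ) + 1 : ℕ) * (2 * π))) = f := by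
          funext x; exact hper.sub_nat_mul_eq (n + 1)
        rw [hper''] at h1
        have e1 : -π + (((n : ℕ) + 1 : ℕ) : ℝ) * (2 * π) = π + n * (2 * π) := by
          push_cast; ring
        rw [e1] at h1
        exact h1
      exact (left.trans ih).trans right
  intro c d
  obtain ⟨n, hn⟩ := exists_nat_ge (max |c| |d|)
  have h2 : (n : ℝ) ≤ n * (2 * π) := by
    nlinarith [Real.pi_gt_three, Nat.cast_nonneg (α := ℝ) n]
  have hc := abs_le.1 (le_trans (le_max_left |c| |d|) hn)
  have hd := abs_le.1 (le_trans (le_max_right |c| |d|) hn)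
  have hpi := Real.pi_pos
  apply (key n).mono_set
  have hle : -π - n * (2 * π) ≤ π + n * (2 * π) := by linarith
  rw [Set.uIcc_of_le hle]
  apply Set.uIcc_subset_Icc <;> constructor <;> linarith

end AuxLemmas

/-- The Alexiewicz norm of a `2π`-periodic function. -/
noncomputable def alexNorm (f : ℝ → ℂ) : ℝ :=
  sSup {r : ℝ | ∃ α β : ℝ, α ≤ β ∧ β ≤ α + 2 * π ∧
    r = ‖(∫ t in α..β, f t)‖}

/-- The variation of a `2π`-periodic function over a period. -/
noncomputable def periodVariation (g : ℝ → ℝ) : ENNReal :=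
  ⨆ a : ℝ, eVariationOn g (Set.Icc a (a + 2 * π))

/-- Hölder inequality:
`|∫ fg| ≤ |∫ f|·inf|g| + ‖f‖_𝕋·Vg ≤ ‖f‖_𝕋·‖g‖_BV`. -/
theorem holder_inequality_alexiewicz (f : ℝ → ℂ) (g : ℝ → ℝ)
    (hfper : Function.Periodic f (2 * π))
    (hfint : IntervalIntegrable f volume (-π) π)
    (hgper : Function.Periodic g (2 * π))
    (hgbv : periodVariation g ≠ ⊤) :
    ‖(∫ t in (-π)..π, f t * (g t : ℂ))‖
      ≤ ‖(∫ t in (-π)..π, f t)‖ * (⨅ x : ℝ, |g x|)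
        + alexNorm f * (periodVariation g).toReal
    ∧ ‖(∫ t in (-π)..π, f t)‖ * (⨅ x : ℝ, |g x|)
        + alexNorm f * (periodVariation g).toReal
      ≤ alexNorm f * ((⨆ x : ℝ, |g x|) + (periodVariation g).toReal) := by
  have hpi := Real.pi_pos
  have h2pi : (0 : ℝ) < 2 * π := by linarith
  have hfall := per_int_aux f hfper hfint
  have per_var : ∀ x : ℝ, eVariationOn g (Set.Icc x (x + 2 * π)) ≠ ⊤ := fun x =>
    ne_top_of_le_ne_top hgbv (le_iSup (fun a => eVariationOn g (Set.Icc a (a + 2 * π))) x)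
  have glocal : LocallyBoundedVariationOn g Set.univ := by
    have key : ∀ (n : ℕ) (x : ℝ), eVariationOn g (Set.Icc x (x + n * (2 * π))) ≠ ⊤ := by
      intro n
      induction n with
      | zero =>
        intro x
        rw [show x + ((0 : ℕ) : ℝ) * (2 * π) = x by push_cast; ring, Set.Icc_self,
          eVariationOn.subsingleton g Set.subsingleton_singleton]
        exact ENNReal.zero_ne_top
      | succ n ih =>
        intro x
        have h1 : x ≤ x + n * (2 * π) := by
          have : (0:ℝ) ≤ (n : ℝ) * (2 * π) := by positivity
          linarith
        have h2 : x + (n : ℝ) * (2 * π) ≤ (x + (n : ℝ) * (2 * π)) + 2 * π := by linarith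
        have hsplit := eVariationOn.Icc_add_Icc g (s := Set.univ) h1 h2 (Set.mem_univ _)
        simp only [Set.univ_inter] at hsplit
        push_cast
        rw [show x + ((n : ℝ) + 1) * (2 * π) = (x + (n : ℝ) * (2 * π)) + 2 * π by ring,
          ← hsplit]
        exact ENNReal.add_ne_top.2 ⟨ih x, per_var _⟩
    intro x y _ _
    show eVariationOn g (Set.univ ∩ Set.Icc x y) ≠ ⊤
    rw [Set.univ_inter]
    rcases le_or_gt x y with hxy | hxy
    · obtain ⟨n, hn⟩ := exists_nat_ge ((y - x) / (2 * π))
      have hyx : y ≤ x + n * (2 * π) := by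
        rw [div_le_iff₀ h2pi] at hn; linarith
      exact ne_top_of_le_ne_top (key n x)
        (eVariationOn.mono g (Set.Icc_subset_Icc_right hyx))
    · rw [eVariationOn.subsingleton g
        (fun t ht u hu => absurd (ht.1.trans ht.2) (not_le.2 hxy))]
      exact ENNReal.zero_ne_top
  obtain ⟨p₀, q₀, hp₀, hq₀, hgpq⟩ := glocal.exists_monotoneOn_sub_monotoneOn
  have gmeas : Measurable g := by
    rw [hgpq]
    exact (monotoneOn_univ.1 hp₀).measurable.sub (monotoneOn_univ.1 hq₀).measurable
  set C := |g 0| + (eVariationOn g (Set.Icc 0 (0 + 2 * π))).toReal with hC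
  have gbound : ∀ x : ℝ, |g x| ≤ C := by
    intro x
    obtain ⟨y, hy, hxy⟩ := hgper.exists_mem_Ico h2pi x 0
    have h1 : dist (g y) (g 0) ≤ (eVariationOn g (Set.Icc 0 (0 + 2 * π))).toReal := by
      rw [dist_edist]
      exact ENNReal.toReal_mono (per_var 0)
        (eVariationOn.edist_le g (Set.mem_Icc.2 ⟨hy.1, hy.2.le⟩)
          (Set.mem_Icc.2 ⟨le_rfl, by linarith⟩))
    rw [Real.dist_eq] at h1
    rw [hxy, hC]
    have := abs_sub_abs_le_abs_sub (g y) (g 0)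
    linarith
  set A := {r : ℝ | ∃ α β : ℝ, α ≤ β ∧ β ≤ α + 2 * π ∧
    r = ‖(∫ t in α..β, f t)‖} with hA
  have hnormper : Function.Periodic (fun t => ‖f t‖) (2 * π) := fun x => by simp [hfper x]
  have hbddA : BddAbove A := by
    refine ⟨∫ t in (0:ℝ)..(0 + 2 * π), ‖f t‖, ?_⟩
    rintro r ⟨α, β, h1, h2, rfl⟩
    calc ‖(∫ t in α..β, f t)‖ ≤ ∫ t in α..β, ‖f t‖ := by
          exact intervalIntegral.norm_integral_le_integral_norm h1
      _ ≤ ∫ t in α..(α + 2 * π), ‖f t‖ := by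
          refine intervalIntegral.integral_mono_interval le_rfl h1 h2
            (Filter.Eventually.of_forall fun t => ?_) (hfall α (α + 2 * π)).norm
          exact norm_nonneg (f t)
      _ = ∫ t in (0:ℝ)..(0 + 2 * π), ‖f t‖ := hnormper.intervalIntegral_add_eq α 0
  have hIleM : ∀ c d : ℝ, c ≤ d → d ≤ c + 2 * π →
      ‖(∫ t in c..d, f t)‖ ≤ alexNorm f := fun c d h1 h2 =>
    le_csSup hbddA ⟨c, d, h1, h2, rfl⟩
  have hM0 : 0 ≤ alexNorm f := by
    have := hIleM 0 0 le_rfl (by linarith)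
    simpa using this
  set M := alexNorm f with hMdef
  set I := ‖(∫ t in (-π)..π, f t)‖ with hI
  have hI0 : 0 ≤ I := norm_nonneg _
  have hIM : I ≤ M := hIleM (-π) π (by linarith) (by linarith)
  set V := (periodVariation g).toReal with hV
  have hV0 : 0 ≤ V := ENNReal.toReal_nonneg
  have hinfbdd : BddBelow (Set.range fun x : ℝ => |g x|) :=
    ⟨0, by rintro _ ⟨x, rfl⟩; exact abs_nonneg _⟩
  have hsupbdd : BddAbove (Set.range fun x : ℝ => |g x|) :=
    ⟨C, by rintro _ ⟨x, rfl⟩; exact gbound x⟩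
  have hinf0 : 0 ≤ ⨅ x : ℝ, |g x| := le_ciInf fun x => abs_nonneg _
  have hinfsup : (⨅ x : ℝ, |g x|) ≤ ⨆ x : ℝ, |g x| :=
    le_trans (ciInf_le hinfbdd 0) (le_ciSup hsupbdd 0)
  constructor
  · refine le_of_forall_pos_le_add fun ε hε => ?_
    set δ := ε / (I + 1) with hδ
    have hδ0 : 0 < δ := div_pos hε (by linarith)
    obtain ⟨a₀, ha₀⟩ := exists_lt_of_ciInf_lt
      (lt_add_of_pos_right (⨅ x : ℝ, |g x|) hδ0)
    set h := fun t : ℝ => g t - g a₀ with hh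
    have hper_h : Function.Periodic (fun t => f t * (h t : ℂ)) (2 * π) := by
      intro x; simp [hh, hfper x, hgper x]
    have hfg_int : ∀ c d : ℝ, IntervalIntegrable (fun t => f t * (g t : ℂ)) volume c d := by
      intro c d
      rw [intervalIntegrable_iff]
      have heq : (fun t => f t * (g t : ℂ)) = fun t => ((g t : ℂ)) * f t := by
        funext t; ring
      rw [heq]
      exact Integrable.bdd_mul (c := C) (intervalIntegrable_iff.1 (hfall c d))
        ((Complex.measurable_ofReal.comp gmeas).aestronglyMeasurable)
        (Filter.Eventually.of_forall fun t => by
          rw [Complex.norm_real, Real.norm_eq_abs]; exact gbound t)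
    have hfh_int : ∀ c d : ℝ, IntervalIntegrable (fun t => f t * (h t : ℂ)) volume c d := by
      intro c d
      have heq : (fun t => f t * (h t : ℂ))
          = fun t => f t * (g t : ℂ) - (g a₀ : ℂ) * f t := by
        funext t; simp only [hh]; push_cast; ring
      rw [heq]
      exact (hfg_int c d).sub ((hfall c d).const_mul _)
    have hsplit : (∫ t in (-π)..π, f t * (g t : ℂ))
        = (∫ t in (-π)..π, f t * (h t : ℂ)) + (g a₀ : ℂ) * ∫ t in (-π)..π, f t := by
      have heq : ∀ t ∈ Set.uIcc (-π) π, f t * (g t : ℂ)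
          = f t * (h t : ℂ) + (g a₀ : ℂ) * f t := by
        intro t _; simp only [hh]; push_cast; ring
      rw [intervalIntegral.integral_congr heq,
        intervalIntegral.integral_add (hfh_int _ _) ((hfall _ _).const_mul _),
        intervalIntegral.integral_const_mul]
    have hshift : (∫ t in (-π)..π, f t * (h t : ℂ))
        = ∫ t in a₀..(a₀ + 2 * π), f t * (h t : ℂ) := by
      have := hper_h.intervalIntegral_add_eq (-π) a₀
      rw [show -π + 2 * π = π by ring] at this
      exact this
    have hloc_h : LocallyBoundedVariationOn h Set.univ := by
      intro x y hx hy
      show eVariationOn h (Set.univ ∩ Set.Icc x y) ≠ ⊤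
      have : eVariationOn h (Set.univ ∩ Set.Icc x y)
          = eVariationOn g (Set.univ ∩ Set.Icc x y) := evar_sub_const_aux g (g a₀) _
      rw [this]
      exact glocal x y hx hy
    have hkey := key2_aux f h a₀ (a₀ + 2 * π) M (by linarith) hloc_h (by simp [hh])
      ((intervalIntegrable_iff_integrableOn_Ioc_of_le (by linarith)).1 (hfall _ _))
      (fun c d h1 h2 h3 => hIleM c d h2 (by linarith))
    have hvar_le : (eVariationOn h (Set.Icc a₀ (a₀ + 2 * π))).toReal ≤ V := by
      have he : eVariationOn h (Set.Icc a₀ (a₀ + 2 * π))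
          = eVariationOn g (Set.Icc a₀ (a₀ + 2 * π)) := evar_sub_const_aux g (g a₀) _
      rw [he, hV]
      exact ENNReal.toReal_mono hgbv
        (le_iSup (fun a => eVariationOn g (Set.Icc a (a + 2 * π))) a₀)
    have hmain : ‖(∫ t in (-π)..π, f t * (g t : ℂ))‖
        ≤ M * V + |g a₀| * I := by
      rw [hsplit]
      have htri := norm_add_le (∫ t in (-π)..π, f t * (h t : ℂ))
        ((g a₀ : ℂ) * ∫ t in (-π)..π, f t)
      have h2 : ‖((g a₀ : ℂ) * ∫ t in (-π)..π, f t)‖ = |g a₀| * I := by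
        rw [norm_mul, Complex.norm_real, Real.norm_eq_abs, hI]
      have h3 : ‖(∫ t in (-π)..π, f t * (h t : ℂ))‖ ≤ M * V := by
        rw [hshift]
        exact hkey.trans (mul_le_mul_of_nonneg_left hvar_le hM0)
      linarith
    have hδI : δ * I ≤ ε := by
      rw [hδ, div_mul_eq_mul_div, div_le_iff₀ (by linarith : (0:ℝ) < I + 1)]
      nlinarith
    have hga : |g a₀| * I ≤ ((⨅ x : ℝ, |g x|) + δ) * I :=
      mul_le_mul_of_nonneg_right ha₀.le hI0
    calc ‖(∫ t in (-π)..π, f t * (g t : ℂ))‖ ≤ M * V + |g a₀| * I := hmain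
      _ ≤ M * V + ((⨅ x : ℝ, |g x|) + δ) * I := by linarith
      _ ≤ I * (⨅ x : ℝ, |g x|) + M * V + ε := by nlinarith
  · have h1 : I * (⨅ x : ℝ, |g x|) ≤ M * ⨆ x : ℝ, |g x| :=
      mul_le_mul hIM hinfsup hinf0 hM0
    rw [mul_add]
    linarith
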